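/- Let Z be a nonnegative irreducible z×z matrix. Suppose for some indices j, k, some η > 0, some period l ∈ ℕ and some N, we have max_{l'∈{0,…,l−1}} [Z^(i+l')]_{j,k} ≥ η·ρ(Z)^i for all i ≥ N. Then for any index k', there exist η' > 0 and N' such that max_{l'∈{0,…,l−1}} [Z^(i+l')]_{j,k'} ≥ η'·ρ(Z)^i for all i ≥ N'. -/

import Mathlib

noncomputable def specRad {n : ℕ} (Z : Matrix (Fin n) (Fin n) ℂ) : ℝ :=
  ⨆ μ ∈ spectrum ℂ Z, ‖μ‖

noncomputable def specRadR {n : ℕ} (Z : Matrix (Fin n) (Fin n) ℝ) : ℝ :=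
  specRad (Z.map Complex.ofReal)

def Irred {n : ℕ} (Z : Matrix (Fin n) (Fin n) ℝ) : Prop :=
  ∀ j k : Fin n, ∃ m : ℕ, 0 < m ∧ 0 < (Z ^ m) j k

theorem stmt_9 {z : ℕ} (Z : Matrix (Fin z) (Fin z) ℝ)
    (hZnn : ∀ i j, 0 ≤ Z i j) (hirr : Irred Z) (hρ : 0 < specRadR Z)
    (j k : Fin z) (η : ℝ) (hη : 0 < η) (l : ℕ) (hl : 0 < l) (N : ℕ)
    (hlow : ∀ i : ℕ, N ≤ i → ∃ l' : ℕ, l' < l ∧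
      η * specRadR Z ^ i ≤ (Z ^ (i + l')) j k) :
    ∀ k' : Fin z, ∃ η' : ℝ, 0 < η' ∧ ∃ N' : ℕ, ∀ i : ℕ, N' ≤ i →
      ∃ l' : ℕ, l' < l ∧ η' * specRadR Z ^ i ≤ (Z ^ (i + l')) j k' := by
  have hpow : ∀ n (a b : Fin z), 0 ≤ (Z ^ n) a b := by
    intro n
    induction n with
    | zero => intro a b; rw [pow_zero, Matrix.one_apply]; split_ifs <;> norm_num
    | succ n ih =>
        intro a b
        rw [pow_succ, Matrix.mul_apply]
        exact Finset.sum_nonneg fun c _ => mul_nonneg (ih a c) (hZnn c b)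
  intro k'
  obtain ⟨m, hm, hmpos⟩ := hirr k k'
  refine ⟨η * (Z ^ m) k k' / specRadR Z ^ m, by positivity, N + m, ?_⟩
  intro i hi
  obtain ⟨l', hl', hle⟩ := hlow (i - m) (by omega)
  refine ⟨l', hl', ?_⟩
  have key : (Z ^ (i - m + l')) j k * (Z ^ m) k k' ≤ (Z ^ (i + l')) j k' := by
    calc (Z ^ (i - m + l')) j k * (Z ^ m) k k'
        ≤ ∑ c, (Z ^ (i - m + l')) j c * (Z ^ m) c k' :=
          Finset.single_le_sum
            (f := fun c => (Z ^ (i - m + l')) j c * (Z ^ m) c k')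
            (fun c _ => mul_nonneg (hpow _ _ _) (hpow _ _ _)) (Finset.mem_univ k)
      _ = (Z ^ (i - m + l') * Z ^ m) j k' := (Matrix.mul_apply).symm
      _ = (Z ^ (i + l')) j k' := by
            rw [← pow_add, show i - m + l' + m = i + l' from by omega]
  have h1 : η * specRadR Z ^ (i - m) * (Z ^ m) k k' ≤ (Z ^ (i + l')) j k' :=
    le_trans (mul_le_mul_of_nonneg_right hle hmpos.le) key
  have h2 : η * (Z ^ m) k k' / specRadR Z ^ m * specRadR Z ^ i
      = η * specRadR Z ^ (i - m) * (Z ^ m) k k' := by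
    have hs : specRadR Z ^ i = specRadR Z ^ (i - m) * specRadR Z ^ m := by
      rw [← pow_add]; congr 1; omega
    have hρm : (specRadR Z ^ m) ≠ 0 := (pow_pos hρ m).ne'
    field_simp [hs]
    rw [hs]; ring
  rw [h2]; exact h1
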